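/- A symmetric matrix A belongs to the cone 𝓐_p (the conical hull of rank-one matrices x xᵀ with x having at least one zero coordinate) if and only if there exist matrices X_1, ..., X_p such that each X_i is positive semidefinite, the i-th row and column of X_i are all zeros, and A = ∑_{i=1}^p X_i. -/

import Mathlib

open Matrix

/-- Membership in the cone `𝓐_p`: the conical hull of matrices `x xᵀ` where
`x` has at least one zero coordinate. -/
def memA {p : ℕ} (A : Matrix (Fin p) (Fin p) ℝ) : Prop :=
  ∃ (r : ℕ) (c : Fin r → ℝ) (x : Fin r → Fin p → ℝ),
    (∀ i, 0 ≤ c i) ∧ (∀ i, ∃ j, x i j = 0) ∧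
    A = ∑ i, c i • vecMulVec (x i) (x i)

lemma psd_smul_vecMulVec {p : ℕ} (c : ℝ) (hc : 0 ≤ c) (x : Fin p → ℝ) :
    (c • vecMulVec x x).PosSemidef := by
  rw [posSemidef_iff_dotProduct_mulVec]
  constructor
  · ext i j
    simp [vecMulVec_apply, Matrix.IsHermitian, conjTranspose_apply, mul_comm]
  · intro y
    have : star y ⬝ᵥ (c • vecMulVec x x) *ᵥ y = c * (x ⬝ᵥ y) ^ 2 := by
      simp [dotProduct, mulVec, vecMulVec_apply, Finset.mul_sum, Finset.sum_mul, sq]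
      rw [Finset.sum_comm]
      congr 1; ext i; congr 1; ext j; ring
    rw [this]
    positivity

lemma memA_zero {p : ℕ} : memA (0 : Matrix (Fin p) (Fin p) ℝ) :=
  ⟨0, ![], ![], fun i => i.elim0, fun i => i.elim0, by simp⟩

lemma memA_add {p : ℕ} {A B : Matrix (Fin p) (Fin p) ℝ} (hA : memA A) (hB : memA B) :
    memA (A + B) := by
  obtain ⟨r1, c1, x1, hc1, hx1, rfl⟩ := hA
  obtain ⟨r2, c2, x2, hc2, hx2, rfl⟩ := hB
  refine ⟨r1 + r2, Fin.append c1 c2, Fin.append x1 x2, fun i => ?_, fun i => ?_, ?_⟩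
  · exact Fin.addCases (fun i => by simp [hc1 i]) (fun i => by simp [hc2 i]) i
  · refine Fin.addCases (fun i => ?_) (fun i => ?_) i
    · obtain ⟨j, hj⟩ := hx1 i; exact ⟨j, by simp [hj]⟩
    · obtain ⟨j, hj⟩ := hx2 i; exact ⟨j, by simp [hj]⟩
  · rw [Fin.sum_univ_add]
    simp

lemma memA_of_psd_zero_row {p : ℕ} (i : Fin p) (X : Matrix (Fin p) (Fin p) ℝ)
    (hpsd : X.PosSemidef) (hrow : ∀ j, X i j = 0) :
    memA X := by
  obtain ⟨B, rfl⟩ : ∃ B : Matrix (Fin p) (Fin p) ℝ, X = Bᴴ * B := by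
    open scoped MatrixOrder Matrix.Norms.L2Operator in
    exact CStarAlgebra.nonneg_iff_eq_star_mul_self.mp hpsd.nonneg
  have hBi : ∀ m, B m i = 0 := by
    have h0 : ∑ m, B m i ^ 2 = 0 := by
      have := hrow i
      simpa [Matrix.mul_apply, conjTranspose_apply, sq] using this
    intro m
    have := (Finset.sum_eq_zero_iff_of_nonneg (fun m _ => sq_nonneg (B m i))).mp h0 m
      (Finset.mem_univ m)
    exact pow_eq_zero_iff (by norm_num) |>.mp this
  refine ⟨p, fun _ => 1, fun m => B m, fun _ => zero_le_one, fun m => ⟨i, hBi m⟩, ?_⟩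
  ext j k
  simp [Matrix.mul_apply, conjTranspose_apply, Matrix.sum_apply, vecMulVec_apply]

/-- A symmetric matrix `A` lies in `𝓐_p` iff `A = ∑ i, X i` where each `X i` is
PSD and has its `i`-th row and column identically zero. -/
theorem memA_iff_exists_psd_decomposition {p : ℕ}
    (A : Matrix (Fin p) (Fin p) ℝ) (hA : A.IsSymm) :
    memA A ↔
      ∃ X : Fin p → Matrix (Fin p) (Fin p) ℝ,
        (∀ i, (X i).PosSemidef) ∧
        (∀ i j, X i i j = 0 ∧ X i j i = 0) ∧
        A = ∑ i, X i := by
  constructor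
  · rintro ⟨r, c, x, hc, hx, rfl⟩
    choose g hg using hx
    refine ⟨fun j => ∑ i ∈ Finset.univ.filter (fun i => g i = j),
      c i • vecMulVec (x i) (x i), fun j => ?_, fun j k => ?_, ?_⟩
    · refine Finset.sum_induction _ _ (fun a b ha hb => ha.add hb) .zero ?_
      exact fun i _ => psd_smul_vecMulVec (c i) (hc i) (x i)
    · constructor <;>
      · beta_reduce
        rw [Matrix.sum_apply]
        refine Finset.sum_eq_zero fun i hi => ?_
        rw [Finset.mem_filter] at hi
        have hxz : x i j = 0 := hi.2 ▸ hg i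
        simp [vecMulVec_apply, hxz]
    · exact (Finset.sum_fiberwise _ _ _).symm
  · rintro ⟨X, hpsd, hzero, rfl⟩
    refine Finset.sum_induction _ _ (fun a b => memA_add) memA_zero fun i _ => ?_
    exact memA_of_psd_zero_row i (X i) (hpsd i) (fun j => (hzero i j).1)
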